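/- Let (W,S) be a Coxeter system. The family of functions {P^u : u ∈ W} ⊆ End(V_W), where V_W is the free ℤ-module on W and P^u acts by the projection composition along a reduced expression of u, is linearly independent over ℤ. -/

import Mathlib

open CoxeterSystem

variable {B W : Type*} [Group W] {M : CoxeterMatrix B}

/-- The projection `P^{{s}}` onto `W^{{s}}`: removes a trailing `s` if that shortens `w`. -/
noncomputable def CoxeterSystem.projSimple (cs : CoxeterSystem M W) (s : B) (w : W) : W :=
  if cs.length (w * cs.simple s) < cs.length w then w * cs.simple s else w

/-- For a word `ω = s₁ ⋯ s_k`, the composition `P^{{s₁}} ∘ ⋯ ∘ P^{{s_k}}`. -/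
noncomputable def CoxeterSystem.projWord (cs : CoxeterSystem M W) (ω : List B) : W → W :=
  ω.foldr (fun s g => cs.projSimple s ∘ g) id

/-- The Bruhat order, via the subword property: `u ≤ v` iff some reduced word for `v`
has a subword whose product is `u`. -/
def CoxeterSystem.bruhatLE (cs : CoxeterSystem M W) (u v : W) : Prop :=
  ∃ ω : List B, cs.IsReduced ω ∧ cs.wordProd ω = v ∧
    ∃ ω' : List B, ω'.Sublist ω ∧ cs.wordProd ω' = u

lemma projWord_nil (cs : CoxeterSystem M W) : cs.projWord [] = id := rfl

lemma projWord_cons (cs : CoxeterSystem M W) (s : B) (ω : List B) :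
    cs.projWord (s :: ω) = cs.projSimple s ∘ cs.projWord ω := rfl

lemma projWord_append (cs : CoxeterSystem M W) (ω₁ ω₂ : List B) :
    cs.projWord (ω₁ ++ ω₂) = cs.projWord ω₁ ∘ cs.projWord ω₂ := by
  induction ω₁ with
  | nil => rfl
  | cons s t ih => simp [projWord_cons, ih, Function.comp_assoc]

lemma exists_sublist_projWord (cs : CoxeterSystem M W) (ω : List B) (v : W) :
    ∃ τ : List B, τ.Sublist ω ∧ cs.projWord ω v * cs.wordProd τ = v := by
  induction ω with
  | nil => exact ⟨[], List.Sublist.refl _, by simp [projWord_nil]⟩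
  | cons s ω ih =>
    obtain ⟨τ, hsub, hτ⟩ := ih
    rw [projWord_cons]
    simp only [Function.comp_apply]
    unfold CoxeterSystem.projSimple
    split
    · refine ⟨s :: τ, List.Sublist.cons₂ s hsub, ?_⟩
      rw [cs.wordProd_cons]
      rw [show cs.projWord ω v * cs.simple s * (cs.simple s * cs.wordProd τ)
          = cs.projWord ω v * (cs.simple s * cs.simple s) * cs.wordProd τ by group]
      simp [hτ]
    · exact ⟨τ, hsub.cons s, hτ⟩

lemma isReduced_of_concat (cs : CoxeterSystem M W) {ω : List B} {s : B}
    (h : cs.IsReduced (ω ++ [s])) : cs.IsReduced ω := by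
  have := h.take ω.length
  rwa [List.take_left] at this

lemma projWord_self (cs : CoxeterSystem M W) (ω : List B) (h : cs.IsReduced ω) :
    cs.projWord ω (cs.wordProd ω) = 1 := by
  induction ω using List.reverseRecOn with
  | nil => simp [projWord_nil]
  | append_singleton ω s ih =>
    have hω : cs.IsReduced ω := isReduced_of_concat cs h
    rw [projWord_append, Function.comp_apply, projWord_cons]
    simp only [Function.comp_apply, projWord_nil, id_eq]
    rw [cs.wordProd_append]
    have hws : cs.wordProd [s] = cs.simple s := by simp [cs.wordProd_cons]
    unfold CoxeterSystem.projSimple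
    have hss : cs.wordProd ω * cs.wordProd [s] * cs.simple s = cs.wordProd ω := by
      rw [hws, mul_assoc, cs.simple_mul_simple_self, mul_one]
    have hlt : cs.length (cs.wordProd ω * cs.wordProd [s] * cs.simple s)
        < cs.length (cs.wordProd ω * cs.wordProd [s]) := by
      rw [hss]
      have h1 : cs.length (cs.wordProd ω) = ω.length := hω
      have h2 : cs.length (cs.wordProd ω * cs.wordProd [s]) = ω.length + 1 := by
        have := h
        unfold CoxeterSystem.IsReduced at this
        rw [cs.wordProd_append] at this
        simpa using this
      omega
    rw [if_pos hlt, hss, ih hω]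

theorem stmt_13 (cs : CoxeterSystem M W)
    (F : W → Module.End ℤ (W →₀ ℤ))
    (hF : ∀ (u : W) (ω : List B), cs.IsReduced ω → cs.wordProd ω = u →
      F u = Finsupp.lmapDomain ℤ ℤ (cs.projWord ω)) :
    LinearIndependent ℤ F := by
  rw [linearIndependent_iff']
  intro s g hsum i hi
  classical
  by_contra hgi
  set T := s.filter (fun u => g u ≠ 0) with hT
  have hTne : T.Nonempty := ⟨i, by simp [hT, hi, hgi]⟩
  obtain ⟨v, hvT, hvmax⟩ := T.exists_max_image cs.length hTne
  have hvs : v ∈ s := (Finset.mem_filter.mp hvT).1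
  have hgv : g v ≠ 0 := (Finset.mem_filter.mp hvT).2
  have key : ∀ u ∈ s, g u • ((F u) (Finsupp.single v 1)) 1
      = if u = v then g v else 0 := by
    intro u hu
    obtain ⟨ω, hred, hπ⟩ := cs.exists_reduced_word' u
    rw [hF u ω hred hπ.symm]
    rw [Finsupp.lmapDomain_apply, Finsupp.mapDomain_single]
    by_cases h1 : cs.projWord ω v = 1
    · obtain ⟨τ, hsub, hτ⟩ := exists_sublist_projWord cs ω v
      rw [h1, one_mul] at hτ
      by_cases hgu : g u = 0
      · have huv : u ≠ v := fun h => hgv (h ▸ hgu)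
        simp [hgu, huv]
      · have huT : u ∈ T := Finset.mem_filter.mpr ⟨hu, hgu⟩
        have h3 : cs.length v ≤ τ.length := hτ ▸ cs.length_wordProd_le τ
        have h4 : τ.length ≤ ω.length := hsub.length_le
        have h5 : cs.length u = ω.length := by rw [hπ]; exact hred
        have h6 : cs.length u ≤ cs.length v := hvmax u huT
        have hlen : τ.length = ω.length := by omega
        have hτω : τ = ω := hsub.eq_of_length hlen
        have huv : u = v := by rw [hπ, ← hτω, hτ]
        simp [huv, h1]
    · have huv : u ≠ v := by
        rintro rfl
        exact h1 (hπ ▸ projWord_self cs ω hred)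
      rw [if_neg huv]
      simp [Finsupp.single_apply, h1]
  have happ : ((∑ u ∈ s, g u • F u) (Finsupp.single v 1)) 1 = 0 := by
    rw [hsum]; simp
  rw [LinearMap.sum_apply] at happ
  rw [Finsupp.finset_sum_apply] at happ
  have : ∑ u ∈ s, g u • ((F u) (Finsupp.single v 1)) 1 = g v := by
    rw [Finset.sum_congr rfl key, Finset.sum_ite_eq' s v (fun _ => g v), if_pos hvs]
  rw [show ∑ u ∈ s, ((g u • F u) (Finsupp.single v 1)) 1
      = ∑ u ∈ s, g u • ((F u) (Finsupp.single v 1)) 1 by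
    refine Finset.sum_congr rfl fun u _ => ?_
    simp] at happ
  exact hgv (this ▸ happ)
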